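/- arXiv:1504.03222 — 2 statements merged into one kernel-verified Lean document; each statement's English description precedes it below -/
import Mathlib

section
/- Let A be an associative unital ring and let s1, s2 ∈ A be idempotents (s1² = s1 and s2² = s2) such that ⟨s1,s2⟩^k = ⟨s2,s1⟩^k for some integer k ≥ 1. Then ⟨1−s1, 1−s2⟩^k = ⟨1−s2, 1−s1⟩^k. -/
/-- The alternating product `⟨t,s⟩^k` with `k` factors whose rightmost factor is `s`:
`⟨t,s⟩^{2i} = (ts)^i` and `⟨t,s⟩^{2i+1} = s(ts)^i`. -/
def altProd {A : Type*} [Monoid A] (t s : A) (k : ℕ) : A :=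
  if Even k then (t * s) ^ (k / 2) else s * (t * s) ^ (k / 2)

section aux
variable {A : Type*} [Ring A]

lemma altProd_succ (t s : A) (k : ℕ) :
    altProd t s (k + 1) = (if Even k then s else t) * altProd t s k := by
  unfold altProd
  rcases Nat.even_or_odd k with he | ho
  · have he' := he
    obtain ⟨i, rfl⟩ := he'
    have h1 : ¬ Even (i + i + 1) := by simp [Nat.even_add_one, he]
    have h2 : (i + i + 1) / 2 = (i + i) / 2 := by omega
    simp [he, h1, h2]
  · have ho' := ho
    obtain ⟨i, rfl⟩ := ho'
    have h1 : Even (2 * i + 1 + 1) := by refine ⟨i + 1, by omega⟩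
    have h2 : (2 * i + 1 + 1) / 2 = (2 * i + 1) / 2 + 1 := by omega
    have h3 : ¬ Even (2 * i + 1) := by simp [Nat.not_even_iff_odd, ho]
    simp only [h1, h3, if_true, if_false, h2]
    rw [pow_succ', mul_assoc]

lemma altProd_leftFactor (t s : A) (k : ℕ) (hk : 1 ≤ k) :
    ∃ x, altProd t s k = (if Even k then t else s) * x := by
  obtain ⟨m, rfl⟩ : ∃ m, k = m + 1 := ⟨k - 1, by omega⟩
  refine ⟨altProd t s m, ?_⟩
  rw [altProd_succ]
  rcases Nat.even_or_odd m with he | ho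
  · simp [he, Nat.even_add_one]
  · simp [Nat.not_even_iff_odd.mpr ho, Nat.even_add_one]

lemma altProd_absorb (t s : A) (ht : t * t = t) (hs : s * s = s) (k : ℕ) (hk : 1 ≤ k) :
    (if Even k then t else s) * altProd t s k = altProd t s k := by
  obtain ⟨x, hx⟩ := altProd_leftFactor t s k hk
  rw [hx, ← mul_assoc]
  rcases Nat.even_or_odd k with he | ho
  · simp [he, ht]
  · simp [Nat.not_even_iff_odd.mpr ho, hs]

lemma altProd_annihilate (t s r : A) (k : ℕ) (hk : 1 ≤ k)
    (h : r * (if Even k then t else s) = 0) :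
    r * altProd t s k = 0 := by
  obtain ⟨x, hx⟩ := altProd_leftFactor t s k hk
  rw [hx, ← mul_assoc, h, zero_mul]

lemma key_d (s1 s2 : A) (h1 : s1 * s1 = s1) (h2 : s2 * s2 = s2) (m : ℕ) (hm : 1 ≤ m) :
    (s1 + s2) * (altProd s1 s2 m - altProd s2 s1 m)
      = (altProd s1 s2 m - altProd s2 s1 m)
        + (altProd s1 s2 (m + 1) - altProd s2 s1 (m + 1)) := by
  have hp1 := altProd_succ s1 s2 m
  have hq1 := altProd_succ s2 s1 m
  have habs_p := altProd_absorb s1 s2 h1 h2 m hm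
  have habs_q := altProd_absorb s2 s1 h2 h1 m hm
  rcases Nat.even_or_odd m with he | ho
  · rw [if_pos he] at hp1 hq1 habs_p habs_q
    rw [hp1, hq1]
    calc (s1 + s2) * (altProd s1 s2 m - altProd s2 s1 m)
        = (s1 * altProd s1 s2 m - s2 * altProd s2 s1 m)
          + (s2 * altProd s1 s2 m - s1 * altProd s2 s1 m) := by noncomm_ring
      _ = (altProd s1 s2 m - altProd s2 s1 m)
          + (s2 * altProd s1 s2 m - s1 * altProd s2 s1 m) := by rw [habs_p, habs_q]
  · have hne : ¬ Even m := Nat.not_even_iff_odd.mpr ho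
    rw [if_neg hne] at hp1 hq1 habs_p habs_q
    rw [hp1, hq1]
    calc (s1 + s2) * (altProd s1 s2 m - altProd s2 s1 m)
        = (s2 * altProd s1 s2 m - s1 * altProd s2 s1 m)
          + (s1 * altProd s1 s2 m - s2 * altProd s2 s1 m) := by noncomm_ring
      _ = (altProd s1 s2 m - altProd s2 s1 m)
          + (s1 * altProd s1 s2 m - s2 * altProd s2 s1 m) := by rw [habs_p, habs_q]

lemma main_ind (s1 s2 : A) (h1 : s1 * s1 = s1) (h2 : s2 * s2 = s2) :
    ∀ k : ℕ, 1 ≤ k →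
      (altProd (1 - s1) (1 - s2) k - altProd (1 - s2) (1 - s1) k
        = (-1 : A) ^ k * (altProd s1 s2 k - altProd s2 s1 k)) ∧
      ((if Even k then
          s2 * altProd (1 - s1) (1 - s2) k - s1 * altProd (1 - s2) (1 - s1) k
        else
          s1 * altProd (1 - s1) (1 - s2) k - s2 * altProd (1 - s2) (1 - s1) k)
        = (-1 : A) ^ k * ((altProd s1 s2 k - altProd s2 s1 k)
            + (altProd s1 s2 (k + 1) - altProd s2 s1 (k + 1)))) := by
  intro k hk
  induction k, hk using Nat.le_induction with
  | base =>
    have e1 : ∀ t s : A, altProd t s 1 = s := by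
      intro t s; simp [altProd]
    have e2 : ∀ t s : A, altProd t s 2 = t * s := by
      intro t s; simp [altProd]
    have h2' : ¬ Even 1 := by decide
    rw [if_neg h2', e1, e1, e1, e1, e2, e2]
    constructor
    · simp only [pow_one]; noncomm_ring
    · simp only [pow_one]; noncomm_ring
  | succ k hk IH =>
    obtain ⟨ED, EH⟩ := IH
    have key1 := key_d s1 s2 h1 h2 k hk
    have key2 := key_d s1 s2 h1 h2 (k + 1) (by omega)
    rcases Nat.even_or_odd k with he | ho
    · -- k even
      have hne : ¬ Even (k + 1) := by simp [Nat.even_add_one, he]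
      rw [if_pos he] at EH
      have hneg : (-1 : A) ^ k = 1 := he.neg_one_pow
      have hneg1 : (-1 : A) ^ (k + 1) = -1 := by rw [pow_succ, hneg, one_mul]
      rw [hneg, one_mul] at ED EH
      have hu : altProd (1 - s1) (1 - s2) (k + 1) = (1 - s2) * altProd (1 - s1) (1 - s2) k := by
        rw [altProd_succ, if_pos he]
      have hv : altProd (1 - s2) (1 - s1) (k + 1) = (1 - s1) * altProd (1 - s2) (1 - s1) k := by
        rw [altProd_succ, if_pos he]
      have hz1 : s1 * altProd (1 - s1) (1 - s2) k = 0 := by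
        apply altProd_annihilate _ _ _ k hk
        rw [if_pos he, mul_sub, mul_one, h1, sub_self]
      have hz2 : s2 * altProd (1 - s2) (1 - s1) k = 0 := by
        apply altProd_annihilate _ _ _ k hk
        rw [if_pos he, mul_sub, mul_one, h2, sub_self]
      set U := altProd (1 - s1) (1 - s2) k with hU
      set V := altProd (1 - s2) (1 - s1) k with hV
      set P := altProd s1 s2 k with hP
      set Q := altProd s2 s1 k with hQ
      set P1 := altProd s1 s2 (k + 1) with hP1
      set Q1 := altProd s2 s1 (k + 1) with hQ1
      set P2 := altProd s1 s2 (k + 1 + 1) with hP2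
      set Q2 := altProd s2 s1 (k + 1 + 1) with hQ2
      constructor
      · rw [hu, hv, hneg1]
        calc (1 - s2) * U - (1 - s1) * V
            = (U - V) - (s2 * U - s1 * V) := by noncomm_ring
          _ = (P - Q) - ((P - Q) + (P1 - Q1)) := by rw [ED, EH]
          _ = -1 * (P1 - Q1) := by noncomm_ring
      · rw [if_neg hne, hu, hv, hneg1]
        have hs2U : s2 * U = ((P - Q) + (P1 - Q1)) + s1 * V := eq_add_of_sub_eq EH
        have hs1V : s1 * V = s2 * U - ((P - Q) + (P1 - Q1)) := by
          rw [hs2U]; noncomm_ring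
        have A1 : s1 * (s2 * U) = s1 * ((P - Q) + (P1 - Q1)) + s1 * V := by
          rw [hs2U, mul_add, ← mul_assoc, h1]
        have A2 : s2 * (s1 * V) = ((P - Q) + (P1 - Q1)) + s1 * V
            - s2 * ((P - Q) + (P1 - Q1)) := by
          rw [hs1V, mul_sub, ← mul_assoc, h2, hs2U]; noncomm_ring
        calc s1 * ((1 - s2) * U) - s2 * ((1 - s1) * V)
            = (s1 * U - s2 * V) + (s2 * (s1 * V) - s1 * (s2 * U)) := by noncomm_ring
          _ = (s2 * (s1 * V) - s1 * (s2 * U)) := by rw [hz1, hz2]; noncomm_ring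
          _ = ((P - Q) + (P1 - Q1))
              - (s1 + s2) * ((P - Q) + (P1 - Q1)) := by rw [A1, A2]; noncomm_ring
          _ = ((P - Q) + (P1 - Q1))
              - (((P - Q) + (P1 - Q1)) + ((P1 - Q1) + (P2 - Q2))) := by
                rw [mul_add, key1, key2]
          _ = -1 * ((P1 - Q1) + (P2 - Q2)) := by noncomm_ring
    · -- k odd
      have hne : ¬ Even k := Nat.not_even_iff_odd.mpr ho
      have heven1 : Even (k + 1) := by simp [Nat.even_add_one, hne]
      rw [if_neg hne] at EH
      have hneg : (-1 : A) ^ k = -1 := ho.neg_one_pow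
      have hneg1 : (-1 : A) ^ (k + 1) = 1 := by
        rw [pow_succ, hneg]; noncomm_ring
      rw [hneg] at ED EH
      have hu : altProd (1 - s1) (1 - s2) (k + 1) = (1 - s1) * altProd (1 - s1) (1 - s2) k := by
        rw [altProd_succ, if_neg hne]
      have hv : altProd (1 - s2) (1 - s1) (k + 1) = (1 - s2) * altProd (1 - s2) (1 - s1) k := by
        rw [altProd_succ, if_neg hne]
      have hz1 : s2 * altProd (1 - s1) (1 - s2) k = 0 := by
        apply altProd_annihilate _ _ _ k hk
        rw [if_neg hne, mul_sub, mul_one, h2, sub_self]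
      have hz2 : s1 * altProd (1 - s2) (1 - s1) k = 0 := by
        apply altProd_annihilate _ _ _ k hk
        rw [if_neg hne, mul_sub, mul_one, h1, sub_self]
      set U := altProd (1 - s1) (1 - s2) k with hU
      set V := altProd (1 - s2) (1 - s1) k with hV
      set P := altProd s1 s2 k with hP
      set Q := altProd s2 s1 k with hQ
      set P1 := altProd s1 s2 (k + 1) with hP1
      set Q1 := altProd s2 s1 (k + 1) with hQ1
      set P2 := altProd s1 s2 (k + 1 + 1) with hP2
      set Q2 := altProd s2 s1 (k + 1 + 1) with hQ2
      constructor
      · rw [hu, hv, hneg1]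
        calc (1 - s1) * U - (1 - s2) * V
            = (U - V) - (s1 * U - s2 * V) := by noncomm_ring
          _ = -1 * (P - Q) - (-1 * ((P - Q) + (P1 - Q1))) := by rw [ED, EH]
          _ = 1 * (P1 - Q1) := by noncomm_ring
      · rw [if_pos heven1, hu, hv, hneg1]
        have hs1U : s1 * U = -1 * ((P - Q) + (P1 - Q1)) + s2 * V := eq_add_of_sub_eq EH
        have hs2V : s2 * V = s1 * U - (-1 * ((P - Q) + (P1 - Q1))) := by
          rw [hs1U]; noncomm_ring
        have A1 : s2 * (s1 * U) = s2 * (-1 * ((P - Q) + (P1 - Q1))) + s2 * V := by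
          rw [hs1U, mul_add, ← mul_assoc s2 s2 V, h2]
        have A2 : s1 * (s2 * V) = -1 * ((P - Q) + (P1 - Q1)) + s2 * V
            - s1 * (-1 * ((P - Q) + (P1 - Q1))) := by
          rw [hs2V, mul_sub, ← mul_assoc, h1, hs1U]; noncomm_ring
        calc s2 * ((1 - s1) * U) - s1 * ((1 - s2) * V)
            = (s2 * U - s1 * V) + (s1 * (s2 * V) - s2 * (s1 * U)) := by noncomm_ring
          _ = (s1 * (s2 * V) - s2 * (s1 * U)) := by rw [hz1, hz2]; noncomm_ring
          _ = -1 * (((P - Q) + (P1 - Q1))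
              - (s1 + s2) * ((P - Q) + (P1 - Q1))) := by rw [A1, A2]; noncomm_ring
          _ = -1 * (((P - Q) + (P1 - Q1))
              - (((P - Q) + (P1 - Q1)) + ((P1 - Q1) + (P2 - Q2)))) := by
                rw [mul_add, key1, key2]
          _ = 1 * ((P1 - Q1) + (P2 - Q2)) := by noncomm_ring

end aux

/-- If `s1, s2` are idempotents of an associative unital ring satisfying
`⟨s1,s2⟩^k = ⟨s2,s1⟩^k` for some `k ≥ 1`, then `⟨1−s1, 1−s2⟩^k = ⟨1−s2, 1−s1⟩^k`. -/
theorem stmt1 {A : Type*} [Ring A] (s1 s2 : A)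
    (h1 : s1 * s1 = s1) (h2 : s2 * s2 = s2) (k : ℕ) (hk : 1 ≤ k)
    (hconf : altProd s1 s2 k = altProd s2 s1 k) :
    altProd (1 - s1) (1 - s2) k = altProd (1 - s2) (1 - s1) k := by
  have h := (main_ind s1 s2 h1 h2 k hk).1
  rw [hconf, sub_self, mul_zero, sub_eq_zero] at h
  exact h
end

section
/- Let (T1, T2) be a confluent pair of reduction operators relative to Y, let k ≥ 1 satisfy ⟨T1,T2⟩^k = ⟨T2,T1⟩^k, and let Γ1 = (id−T2)·Σ_{i odd, 1 ≤ i ≤ k−1} ⟨T2,T1⟩^i and Γ2 = (id−T1)·Σ_{i odd, 1 ≤ i ≤ k−1} ⟨T1,T2⟩^i. Let T1∨T2 be the unique reduction operator relative to Y whose kernel is ker(T1) ∩ ker(T2). If W is a subspace of KY contained in ker(T2), then Γ1 and T1∨T2 coincide on W; symmetrically, if W ⊆ ker(T1), then Γ2 and T1∨T2 coincide on W. -/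
/-- A *reduction operator relative to `Y`* (a finite totally ordered set): a linear projector
`T` of `KY` such that for every `y ∈ Y`, either `T(y) = y` or every element of the support of
`T(y)` is strictly smaller than `y`. -/
def IsReductionOperator {K Y : Type*} [Field K] [Fintype Y] [LinearOrder Y]
    (T : (Y →₀ K) →ₗ[K] (Y →₀ K)) : Prop :=
  T ∘ₗ T = T ∧
    ∀ y : Y, T (Finsupp.single y 1) = Finsupp.single y 1 ∨
      ∀ z ∈ (T (Finsupp.single y 1)).support, z < y

section Aux

variable {K Y : Type*} [Field K] [Fintype Y] [LinearOrder Y]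

lemma red_idem {T : (Y →₀ K) →ₗ[K] (Y →₀ K)} (h : IsReductionOperator T) (x : Y →₀ K) :
    T (T x) = T x := by
  have := congrArg (fun f => f x) h.1
  simpa using this

lemma altProd_even {A : Type*} [Monoid A] (t s : A) (j : ℕ) :
    altProd t s (2 * j) = (t * s) ^ j := by
  simp [altProd, even_two_mul, Nat.mul_div_cancel_left _ (by norm_num : 0 < 2)]

lemma altProd_odd {A : Type*} [Monoid A] (t s : A) (j : ℕ) :
    altProd t s (2 * j + 1) = s * (t * s) ^ j := by
  have h1 : ¬ Even (2 * j + 1) := by simp [Nat.even_add_one, even_two_mul]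
  have h2 : (2 * j + 1) / 2 = j := by omega
  simp [altProd, h1, h2]

lemma red_supported {T : (Y →₀ K) →ₗ[K] (Y →₀ K)} (h : IsReductionOperator T) (y : Y)
    {x : Y →₀ K} (hx : x ∈ Finsupp.supported K K (Set.Iio y)) :
    T x ∈ Finsupp.supported K K (Set.Iio y) := by
  rw [Finsupp.supported_eq_span_single] at hx
  induction hx using Submodule.span_induction with
  | mem w hw =>
      obtain ⟨z, hz, rfl⟩ := hw
      rcases h.2 z with hfix | hlt
      · rw [hfix, Finsupp.mem_supported]
        intro a ha
        have h' : a = z := Finset.mem_singleton.mp (Finsupp.support_single_subset ha)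
        rw [h']; exact hz
      · rw [Finsupp.mem_supported]
        intro a ha
        exact lt_trans (hlt a ha) hz
  | zero => simp
  | add a b _ _ ha hb => rw [map_add]; exact Submodule.add_mem _ ha hb
  | smul c a _ ha => rw [map_smul]; exact Submodule.smul_mem _ c ha

/-- If `T` fixes `single y 1` and `ker U ≤ ker T`, then `U` fixes `single y 1`. -/
lemma red_fix_mono {T U : (Y →₀ K) →ₗ[K] (Y →₀ K)} (hT : IsReductionOperator T)
    (hU : IsReductionOperator U) (hker : LinearMap.ker U ≤ LinearMap.ker T)
    (y : Y) (hy : T (Finsupp.single y 1) = Finsupp.single y 1) :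
    U (Finsupp.single y 1) = Finsupp.single y 1 := by
  by_contra hne
  have hlt : ∀ z ∈ (U (Finsupp.single y 1)).support, z < y := (hU.2 y).resolve_left hne
  have hwk : Finsupp.single y 1 - U (Finsupp.single y 1) ∈ LinearMap.ker U := by
    rw [LinearMap.mem_ker, map_sub, red_idem hU, sub_self]
  have hTk := hker hwk
  rw [LinearMap.mem_ker, map_sub, hy, sub_eq_zero] at hTk
  -- single y 1 = T (U (single y 1)), and RHS is supported on Iio y
  have hsupp : U (Finsupp.single y 1) ∈ Finsupp.supported K K (Set.Iio y) := by
    rw [Finsupp.mem_supported]; intro a ha; exact hlt a ha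
  have := red_supported hT y hsupp
  rw [← hTk, Finsupp.mem_supported] at this
  have hy' : y ∈ (Finsupp.single y (1:K)).support := by
    rw [Finsupp.support_single_ne_zero y one_ne_zero]; simp
  exact lt_irrefl y (this hy')

lemma red_range_le_span {T : (Y →₀ K) →ₗ[K] (Y →₀ K)} (h : IsReductionOperator T) :
    LinearMap.range T ≤ Submodule.span K
      ((fun y => Finsupp.single y (1:K)) '' {y | T (Finsupp.single y 1) = Finsupp.single y 1}) := by
  set S := Submodule.span K
      ((fun y => Finsupp.single y (1:K)) '' {y | T (Finsupp.single y 1) = Finsupp.single y 1})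
  have key : ∀ y : Y, T (Finsupp.single y 1) ∈ S := by
    intro y
    induction y using WellFoundedLT.induction with
    | ind y ih =>
      rcases h.2 y with hfix | hlt
      · rw [hfix]
        exact Submodule.subset_span ⟨y, hfix, rfl⟩
      · -- T (single y 1) = T (T (single y 1)) and write T (single y 1) as sum of singles
        have hidem := red_idem h (Finsupp.single y 1)
        have hexp : T (Finsupp.single y 1) =
            ∑ z ∈ (T (Finsupp.single y 1)).support,
              (T (Finsupp.single y 1)) z • Finsupp.single z (1:K) := by
          conv_lhs => rw [← Finsupp.sum_single (T (Finsupp.single y 1))]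
          rw [Finsupp.sum]
          exact Finset.sum_congr rfl fun z _ => by rw [Finsupp.smul_single, smul_eq_mul, mul_one]
        have hmem : T (T (Finsupp.single y 1)) ∈ S := by
          rw [hexp]
          rw [map_sum]
          refine Submodule.sum_mem _ fun z hz => ?_
          rw [map_smul]
          exact Submodule.smul_mem _ _ (ih z (hlt z hz))
        rwa [hidem] at hmem
  intro x hx
  obtain ⟨w, rfl⟩ := hx
  -- write w over the single-basis
  have hexp : T w = ∑ z ∈ w.support, w z • T (Finsupp.single z (1:K)) := by
    conv_lhs => rw [← Finsupp.sum_single w, Finsupp.sum]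
    rw [map_sum]
    exact Finset.sum_congr rfl fun z _ => by
      rw [← map_smul, Finsupp.smul_single, smul_eq_mul, mul_one]
  rw [hexp]
  exact Submodule.sum_mem _ fun z _ => Submodule.smul_mem _ _ (key z)

lemma red_range_mono {T U : (Y →₀ K) →ₗ[K] (Y →₀ K)} (hT : IsReductionOperator T)
    (hU : IsReductionOperator U) (hker : LinearMap.ker U ≤ LinearMap.ker T) :
    LinearMap.range T ≤ LinearMap.range U := by
  refine (red_range_le_span hT).trans (Submodule.span_le.mpr ?_)
  rintro _ ⟨y, hy, rfl⟩
  exact ⟨Finsupp.single y 1, red_fix_mono hT hU hker y hy⟩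

lemma altProd_apply_zero {T1 T2 : (Y →₀ K) →ₗ[K] (Y →₀ K)} {v : Y →₀ K}
    (hv : T2 v = 0) {k : ℕ} (hk : 1 ≤ k) : (altProd T1 T2 k) v = 0 := by
  have hpow : ∀ m : ℕ, 1 ≤ m → ((T1 * T2) ^ m) v = 0 := by
    intro m hm
    obtain ⟨n, rfl⟩ := Nat.exists_eq_add_of_le hm
    rw [add_comm, pow_succ, Module.End.mul_apply, Module.End.mul_apply, hv, map_zero, map_zero]
  rcases Nat.even_or_odd k with he | ho
  · obtain ⟨m, rfl⟩ := he
    rw [← two_mul, altProd_even]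
    exact hpow m (by omega)
  · obtain ⟨m, rfl⟩ := ho
    rw [altProd_odd, Module.End.mul_apply]
    rcases Nat.eq_zero_or_pos m with rfl | hm
    · simpa using hv
    · rw [hpow m hm, map_zero]

/-- The core computation. -/
lemma key_lemma {T1 T2 U : (Y →₀ K) →ₗ[K] (Y →₀ K)}
    (h1 : IsReductionOperator T1) (h2 : IsReductionOperator T2)
    {k : ℕ} (hk : 1 ≤ k) (hconf : altProd T1 T2 k = altProd T2 T1 k)
    (hU : IsReductionOperator U)
    (hkerU : LinearMap.ker U = LinearMap.ker T1 ⊓ LinearMap.ker T2)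
    (v : Y →₀ K) (hv : T2 v = 0) :
    ((1 - T2) * ∑ i ∈ (Finset.Icc 1 (k - 1)).filter (fun i => Odd i), altProd T2 T1 i) v
      = U v := by
  set D : ℕ → (Y →₀ K) := fun j => ((T2 * T1) ^ j) v with hD
  have hD0 : D 0 = v := by simp [hD]
  have hDsucc : ∀ j, D (j + 1) = T2 (T1 (D j)) := by
    intro j
    rw [hD]
    simp only [pow_succ', Module.End.mul_apply]
  -- rewrite Γ1 v as a range sum
  have hsum : ((1 - T2) * ∑ i ∈ (Finset.Icc 1 (k - 1)).filter (fun i => Odd i),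
      altProd T2 T1 i) v = ∑ j ∈ Finset.range (k / 2), (T1 (D j) - D (j + 1)) := by
    rw [Finset.mul_sum, LinearMap.sum_apply]
    refine (Finset.sum_nbij' (fun j => 2 * j + 1) (fun i => i / 2) ?_ ?_ ?_ ?_ ?_).symm
    · intro j hj
      simp only [Finset.mem_range] at hj
      simp only [Finset.mem_filter, Finset.mem_Icc, Nat.odd_iff]
      omega
    · intro i hi
      simp only [Finset.mem_filter, Finset.mem_Icc, Nat.odd_iff] at hi
      simp only [Finset.mem_range]
      omega
    · intro j _
      omega
    · intro i hi
      simp only [Finset.mem_filter, Finset.mem_Icc, Nat.odd_iff] at hi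
      omega
    · intro j _
      rw [altProd_odd, Module.End.mul_apply, Module.End.mul_apply, LinearMap.sub_apply,
        Module.End.one_apply, hDsucc]
  set G : Y →₀ K := ∑ j ∈ Finset.range (k / 2), (T1 (D j) - D (j + 1)) with hG
  -- A k = 0 facts
  have hAk : altProd T2 T1 k v = 0 := by rw [← hconf]; exact altProd_apply_zero hv hk
  have hT1Dm : T1 (D (k / 2)) = 0 := by
    rcases Nat.even_or_odd k with he | ho
    · obtain ⟨m, rfl⟩ := he
      have hm : (m + m) / 2 = m := by omega
      rw [hm]
      have h' : D m = 0 := by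
        have hAP : altProd T2 T1 (m + m) = (T2 * T1) ^ m := by
          rw [show m + m = 2 * m by ring, altProd_even]
        have : D m = altProd T2 T1 (m + m) v := by rw [hAP]
        rw [this]; exact hAk
      rw [h', map_zero]
    · obtain ⟨m, rfl⟩ := ho
      have hm : (2 * m + 1) / 2 = m := by omega
      rw [hm]
      have hAP : altProd T2 T1 (2 * m + 1) = T1 * (T2 * T1) ^ m := altProd_odd T2 T1 m
      have : T1 (D m) = altProd T2 T1 (2 * m + 1) v := by
        rw [hAP, Module.End.mul_apply]
      rw [this]; exact hAk
  -- T1 (v - G) = 0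
  have hT1G : T1 G = T1 v - T1 (D (k / 2)) := by
    rw [hG, map_sum]
    have : ∀ j ∈ Finset.range (k / 2),
        T1 (T1 (D j) - D (j + 1)) = T1 (D j) - T1 (D (j + 1)) := by
      intro j _
      rw [map_sub, red_idem h1]
    rw [Finset.sum_congr rfl this, Finset.sum_range_sub' (fun j => T1 (D j)), hD0]
  have hker1 : T1 (v - G) = 0 := by
    rw [map_sub, hT1G, hT1Dm, sub_zero, sub_self]
  -- T2 (v - G) = 0
  have hT2G : T2 G = 0 := by
    rw [hG, map_sum]
    refine Finset.sum_eq_zero fun j _ => ?_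
    rw [map_sub, hDsucc, red_idem h2, sub_self]
  have hker2 : T2 (v - G) = 0 := by
    rw [map_sub, hv, hT2G, sub_zero]
  -- v - G ∈ ker U
  have hvG : U (v - G) = 0 := by
    have : v - G ∈ LinearMap.ker U := by
      rw [hkerU, Submodule.mem_inf]
      exact ⟨LinearMap.mem_ker.mpr hker1, LinearMap.mem_ker.mpr hker2⟩
    exact LinearMap.mem_ker.mp this
  -- G ∈ range U
  have hrange1 : LinearMap.range T1 ≤ LinearMap.range U :=
    red_range_mono h1 hU (by rw [hkerU]; exact inf_le_left)
  have hrange2 : LinearMap.range T2 ≤ LinearMap.range U :=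
    red_range_mono h2 hU (by rw [hkerU]; exact inf_le_right)
  have hGrange : G ∈ LinearMap.range U := by
    rw [hG]
    refine Submodule.sum_mem _ fun j _ => Submodule.sub_mem _ ?_ ?_
    · exact hrange1 ⟨D j, rfl⟩
    · rw [hDsucc]; exact hrange2 ⟨T1 (D j), rfl⟩
  have hUG : U G = G := by
    obtain ⟨x, hx⟩ := hGrange
    rw [← hx, red_idem hU]
  -- conclude
  rw [hsum, ← hUG]
  have hsub : U v - U G = 0 := by rw [← map_sub]; exact hvG
  exact (sub_eq_zero.mp hsub).symm

end Aux

/-- Let `(T1, T2)` be a confluent pair of reduction operators relative to `Y`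
(witnessed by `k ≥ 1` with `⟨T1,T2⟩^k = ⟨T2,T1⟩^k`), let
`Γ1 = (id−T2)·Σ_{i odd, 1 ≤ i ≤ k−1} ⟨T2,T1⟩^i` and
`Γ2 = (id−T1)·Σ_{i odd, 1 ≤ i ≤ k−1} ⟨T1,T2⟩^i`, and let `U = T1 ∨ T2` be the (unique)
reduction operator relative to `Y` whose kernel is `ker T1 ∩ ker T2`.  If `W` is a subspace of
`KY` contained in `ker T2`, then `Γ1` and `T1 ∨ T2` coincide on `W`; symmetrically, if
`W ⊆ ker T1`, then `Γ2` and `T1 ∨ T2` coincide on `W`. -/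
theorem stmt4 {K Y : Type*} [Field K] [Fintype Y] [LinearOrder Y]
    (T1 T2 : (Y →₀ K) →ₗ[K] (Y →₀ K))
    (h1 : IsReductionOperator T1) (h2 : IsReductionOperator T2)
    (k : ℕ) (hk : 1 ≤ k) (hconf : altProd T1 T2 k = altProd T2 T1 k)
    (U : (Y →₀ K) →ₗ[K] (Y →₀ K)) (hU : IsReductionOperator U)
    (hkerU : LinearMap.ker U = LinearMap.ker T1 ⊓ LinearMap.ker T2)
    (W : Submodule K (Y →₀ K)) :
    let Γ1 := (1 - T2) * ∑ i ∈ (Finset.Icc 1 (k - 1)).filter (fun i => Odd i), altProd T2 T1 i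
    let Γ2 := (1 - T1) * ∑ i ∈ (Finset.Icc 1 (k - 1)).filter (fun i => Odd i), altProd T1 T2 i
    (W ≤ LinearMap.ker T2 → ∀ v ∈ W, Γ1 v = U v) ∧
    (W ≤ LinearMap.ker T1 → ∀ v ∈ W, Γ2 v = U v) := by
  intro Γ1 Γ2
  constructor
  · intro hW v hv
    exact key_lemma h1 h2 hk hconf hU hkerU v (LinearMap.mem_ker.mp (hW hv))
  · intro hW v hv
    exact key_lemma h2 h1 hk hconf.symm hU (by rw [hkerU, inf_comm]) v
      (LinearMap.mem_ker.mp (hW hv))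
end
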